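/- arXiv:1511.04096 — 2 statements merged into one kernel-verified Lean document; each statement's English description precedes it below -/
import Mathlib

section
/- Let $y_1, y_2, y_3, y_4$ be real numbers with $y_2 > 0$ and $y_2 y_3 \ge y_4^2$. Then $\frac{y_2^2}{4}\left(y_1^2 - \frac{4(y_1 y_4 - y_3)}{y_2}\right) \ge \left(y_4 - \frac{y_1 y_2}{2}\right)^2$. Consequently, setting $D = \sqrt{y_1^2 - 4(y_1 y_4 - y_3)/y_2}$, $\hat\mu_a = (y_1 - D)/2$, $\hat\mu_b = (y_1 + D)/2$, both $(y_4 - \hat\mu_a y_2)(\hat\mu_b - \hat\mu_a) \ge 0$ and $(\hat\mu_b y_2 - y_4)(\hat\mu_b - \hat\mu_a) \ge 0$ hold. -/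
/-- if `y₂ > 0` and `y₂y₃ ≥ y₄²`, then
`(y₂²/4)(y₁² - 4(y₁y₄ - y₃)/y₂) ≥ (y₄ - y₁y₂/2)²`; consequently, with
`D = √(y₁² - 4(y₁y₄ - y₃)/y₂)`, `μ̂_a = (y₁-D)/2`, `μ̂_b = (y₁+D)/2`, both
`(y₄ - μ̂_a y₂)(μ̂_b - μ̂_a) ≥ 0` and `(μ̂_b y₂ - y₄)(μ̂_b - μ̂_a) ≥ 0`. -/
theorem stmt18 (y1 y2 y3 y4 : ℝ) (hy2 : 0 < y2) (h : y2 * y3 ≥ y4 ^ 2)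
    (D μa μb : ℝ)
    (hD : D = Real.sqrt (y1 ^ 2 - 4 * (y1 * y4 - y3) / y2))
    (hμa : μa = (y1 - D) / 2) (hμb : μb = (y1 + D) / 2) :
    y2 ^ 2 / 4 * (y1 ^ 2 - 4 * (y1 * y4 - y3) / y2) ≥ (y4 - y1 * y2 / 2) ^ 2 ∧
    (y4 - μa * y2) * (μb - μa) ≥ 0 ∧
    (μb * y2 - y4) * (μb - μa) ≥ 0 := by
  set E := y1 ^ 2 - 4 * (y1 * y4 - y3) / y2 with hE
  have hne : y2 ≠ 0 := ne_of_gt hy2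
  have h1 : y2 ^ 2 / 4 * E ≥ (y4 - y1 * y2 / 2) ^ 2 := by
    have : y2 ^ 2 / 4 * E - (y4 - y1 * y2 / 2) ^ 2 = y2 * y3 - y4 ^ 2 := by
      rw [hE]; field_simp; ring
    nlinarith [this]
  have hEnonneg : 0 ≤ E := by
    have h0 : 0 ≤ y2 ^ 2 / 4 * E := le_trans (sq_nonneg _) h1
    have hc : (0:ℝ) < y2 ^ 2 / 4 := by positivity
    exact (mul_nonneg_iff_of_pos_left hc).mp h0
  have hD2 : D ^ 2 = E := by rw [hD, Real.sq_sqrt hEnonneg]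
  have hDnn : 0 ≤ D := hD ▸ Real.sqrt_nonneg _
  have hdiff : μb - μa = D := by rw [hμa, hμb]; ring
  have key : (y2 / 2 * D) ^ 2 ≥ (y4 - y1 * y2 / 2) ^ 2 := by
    have : (y2 / 2 * D) ^ 2 = y2 ^ 2 / 4 * E := by rw [mul_pow, hD2]; ring
    linarith
  have hyD : 0 ≤ y2 / 2 * D := by positivity
  have habs : |y4 - y1 * y2 / 2| ≤ y2 / 2 * D := by
    nlinarith [abs_nonneg (y4 - y1 * y2 / 2), sq_abs (y4 - y1 * y2 / 2)]
  have hle := abs_le.mp habs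
  refine ⟨h1, ?_, ?_⟩
  · rw [hdiff, hμa]; nlinarith [hle.1, hle.2]
  · rw [hdiff, hμb]; nlinarith [hle.1, hle.2]
end

section
/- Given $\mu_a < \mu_b$, $\sigma_a, \sigma_b > 0$, $\delta > 0$, set $y_1 = \mu_a + \mu_b$, $y_2 = \frac{\sigma_a^2 + \sigma_b^2}{(\mu_b-\mu_a)^2}$, $y_3 = \frac{\mu_b^2\sigma_a^2 + \mu_a^2\sigma_b^2}{(\mu_b-\mu_a)^2}$, $y_4 = \frac{\mu_b\sigma_a^2 + \mu_a\sigma_b^2}{(\mu_b-\mu_a)^2}$. Then $y_1^2 - \frac{4(y_1 y_4 - y_3)}{y_2} = (\mu_b - \mu_a)^2$, and the method-of-moments inversion recovers the parameters: $\frac{y_1 - \sqrt{y_1^2 - 4(y_1y_4-y_3)/y_2}}{2} = \mu_a$, $\frac{y_1 + \sqrt{y_1^2 - 4(y_1y_4-y_3)/y_2}}{2} = \mu_b$, $(y_4 - \mu_a y_2)(\mu_b - \mu_a) = \sigma_a^2$, and $(\mu_b y_2 - y_4)(\mu_b - \mu_a) = \sigma_b^2$. -/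
/-- identifiability of the method-of-moments inversion: with
`y₁ = μ_a+μ_b`, `y₂ = (σ_a²+σ_b²)/(μ_b-μ_a)²`, `y₃ = (μ_b²σ_a²+μ_a²σ_b²)/(μ_b-μ_a)²`,
`y₄ = (μ_bσ_a²+μ_aσ_b²)/(μ_b-μ_a)²`, the discriminant equals `(μ_b-μ_a)²` and the
inversion recovers `μ_a, μ_b, σ_a², σ_b²`. -/
theorem stmt19 (μa μb σa σb δ : ℝ) (hμ : μa < μb) (hσa : 0 < σa) (hσb : 0 < σb)
    (hδ : 0 < δ)
    (y1 y2 y3 y4 : ℝ)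
    (hy1 : y1 = μa + μb)
    (hy2 : y2 = (σa ^ 2 + σb ^ 2) / (μb - μa) ^ 2)
    (hy3 : y3 = (μb ^ 2 * σa ^ 2 + μa ^ 2 * σb ^ 2) / (μb - μa) ^ 2)
    (hy4 : y4 = (μb * σa ^ 2 + μa * σb ^ 2) / (μb - μa) ^ 2) :
    y1 ^ 2 - 4 * (y1 * y4 - y3) / y2 = (μb - μa) ^ 2 ∧
    (y1 - Real.sqrt (y1 ^ 2 - 4 * (y1 * y4 - y3) / y2)) / 2 = μa ∧
    (y1 + Real.sqrt (y1 ^ 2 - 4 * (y1 * y4 - y3) / y2)) / 2 = μb ∧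
    (y4 - μa * y2) * (μb - μa) = σa ^ 2 ∧
    (μb * y2 - y4) * (μb - μa) = σb ^ 2 := by
  have hd : (0:ℝ) < μb - μa := by linarith
  have hd2 : (μb - μa) ^ 2 ≠ 0 := pow_ne_zero 2 (ne_of_gt hd)
  have hs : (0:ℝ) < σa ^ 2 + σb ^ 2 := by positivity
  have hy2ne : y2 ≠ 0 := by
    rw [hy2]; exact ne_of_gt (div_pos hs (by positivity))
  have hdisc : y1 ^ 2 - 4 * (y1 * y4 - y3) / y2 = (μb - μa) ^ 2 := by
    subst hy1 hy2 hy3 hy4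
    field_simp at hy2ne ⊢
    ring
  have hsqrt : Real.sqrt (y1 ^ 2 - 4 * (y1 * y4 - y3) / y2) = μb - μa := by
    rw [hdisc, Real.sqrt_sq hd.le]
  refine ⟨hdisc, ?_, ?_, ?_, ?_⟩
  · rw [hsqrt, hy1]; ring
  · rw [hsqrt, hy1]; ring
  · subst hy2 hy4; field_simp; ring
  · subst hy2 hy4; field_simp; ring
end
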